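/- For every ε > 0, the system with F_ε = [[F11, I₂],[(1/(2ε))I₂, −(1/ε)I₂]] ∈ ℂ^{4×4}, F11 = [[−1/2, 1],[−1, −1/2]], G_ε = [[−I₂],[(1/ε)I₂]] ∈ ℂ^{4×2}, H = [I₂ −2I₂] ∈ ℂ^{2×4} is minimal: (controllability) if x ∈ ℂ⁴ satisfies x†F_ε = λx† for some λ ∈ ℂ and x†G_ε = 0, then x = 0; and (observability) if x ∈ ℂ⁴ satisfies F_εx = λx for some λ ∈ ℂ and Hx = 0, then x = 0. -/

import Mathlib

open Matrix

theorem example_minimal (ε : ℝ) (hε : 0 < ε) :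
    (∀ (x : Fin 2 ⊕ Fin 2 → ℂ) (lam : ℂ),
      Matrix.vecMul (star x)
          (fromBlocks (!![-1/2, 1; -1, -1/2] : Matrix (Fin 2) (Fin 2) ℂ)
            (1 : Matrix (Fin 2) (Fin 2) ℂ)
            ((1 / (2 * (ε : ℂ))) • (1 : Matrix (Fin 2) (Fin 2) ℂ))
            ((-(1 / (ε : ℂ))) • (1 : Matrix (Fin 2) (Fin 2) ℂ))) = lam • star x →
      Matrix.vecMul (star x)
          (fromRows (-(1 : Matrix (Fin 2) (Fin 2) ℂ))
            ((1 / (ε : ℂ)) • (1 : Matrix (Fin 2) (Fin 2) ℂ))) = 0 →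
      x = 0) ∧
    (∀ (x : Fin 2 ⊕ Fin 2 → ℂ) (lam : ℂ),
      (fromBlocks (!![-1/2, 1; -1, -1/2] : Matrix (Fin 2) (Fin 2) ℂ)
          (1 : Matrix (Fin 2) (Fin 2) ℂ)
          ((1 / (2 * (ε : ℂ))) • (1 : Matrix (Fin 2) (Fin 2) ℂ))
          ((-(1 / (ε : ℂ))) • (1 : Matrix (Fin 2) (Fin 2) ℂ))).mulVec x = lam • x →
      (fromCols (1 : Matrix (Fin 2) (Fin 2) ℂ)
          (-(2 : ℂ) • (1 : Matrix (Fin 2) (Fin 2) ℂ))).mulVec x = 0 →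
      x = 0) := by
  have hε' : (ε : ℂ) ≠ 0 := by
    exact_mod_cast Complex.ofReal_ne_zero.mpr hε.ne'
  constructor
  · -- Controllability
    intro x lam h1 h2
    have e1 := congrFun h1 (Sum.inl 0)
    have e2 := congrFun h1 (Sum.inl 1)
    have e3 := congrFun h1 (Sum.inr 0)
    have e4 := congrFun h1 (Sum.inr 1)
    have f1 := congrFun h2 0
    have f2 := congrFun h2 1
    simp only [Matrix.vecMul, dotProduct, Fintype.sum_sum_type, Fin.sum_univ_two,
      Matrix.fromBlocks_apply₁₁, Matrix.fromBlocks_apply₁₂, Matrix.fromBlocks_apply₂₁,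
      Matrix.fromBlocks_apply₂₂, Matrix.fromRows_apply_inl, Matrix.fromRows_apply_inr,
      Matrix.smul_apply, Matrix.one_apply, Matrix.neg_apply, Matrix.cons_val', Matrix.cons_val_zero,
      Matrix.cons_val_one, Matrix.head_cons, Matrix.head_fin_const, Matrix.empty_val',
      Matrix.cons_val_fin_one, Pi.smul_apply, Pi.star_apply, Pi.zero_apply,
      smul_eq_mul] at e1 e2 e3 e4 f1 f2
    set a := (starRingEnd ℂ) (x (Sum.inl 0)) with ha_def
    set b := (starRingEnd ℂ) (x (Sum.inl 1)) with hb_def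
    set c := (starRingEnd ℂ) (x (Sum.inr 0)) with hc_def
    set d := (starRingEnd ℂ) (x (Sum.inr 1)) with hd_def
    simp only [if_true, if_false, mul_one, mul_zero, zero_mul, one_mul, add_zero, zero_add,
      mul_ite, ite_mul] at e1 e2 e3 e4 f1 f2
    norm_num at e1 e2 e3 e4 f1 f2
    field_simp at e1 e2 e3 e4 f1 f2
    have hc : c = a * ε := by linear_combination f1
    have hd : d = b * ε := by linear_combination f2
    have g3 : (lam * a) * (↑ε * ↑ε) = 0 := by linear_combination -e3 - (1 + lam * ↑ε) * hc
    have g4 : (lam * b) * (↑ε * ↑ε) = 0 := by linear_combination -e4 - (1 + lam * ↑ε) * hd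
    have g1 : ↑ε * (lam * a + b) = 0 := by linear_combination (-(1:ℂ)/2) * e1 + (1/2) * hc
    have g2 : ↑ε * (a - lam * b) = 0 := by linear_combination ((1:ℂ)/2) * e2 - (1/2) * hd
    have h3 : lam * a = 0 := (mul_eq_zero.mp g3).resolve_right (mul_ne_zero hε' hε')
    have h4 : lam * b = 0 := (mul_eq_zero.mp g4).resolve_right (mul_ne_zero hε' hε')
    have hb : b = 0 := by linear_combination (mul_eq_zero.mp g1).resolve_left hε' - h3
    have ha : a = 0 := by linear_combination (mul_eq_zero.mp g2).resolve_left hε' + h4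
    have hc0 : c = 0 := by rw [hc, ha, zero_mul]
    have hd0 : d = 0 := by rw [hd, hb, zero_mul]
    funext i
    rcases i with i | i <;> fin_cases i
    · simpa [ha_def, map_eq_zero] using ha
    · simpa [hb_def, map_eq_zero] using hb
    · simpa [hc_def, map_eq_zero] using hc0
    · simpa [hd_def, map_eq_zero] using hd0
  · -- Observability
    intro x lam h1 h2
    have e1 := congrFun h1 (Sum.inl 0)
    have e2 := congrFun h1 (Sum.inl 1)
    have e3 := congrFun h1 (Sum.inr 0)
    have e4 := congrFun h1 (Sum.inr 1)
    have f1 := congrFun h2 0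
    have f2 := congrFun h2 1
    simp only [Matrix.mulVec, dotProduct, Fintype.sum_sum_type, Fin.sum_univ_two,
      Matrix.fromBlocks_apply₁₁, Matrix.fromBlocks_apply₁₂, Matrix.fromBlocks_apply₂₁,
      Matrix.fromBlocks_apply₂₂, Matrix.fromCols_apply_inl, Matrix.fromCols_apply_inr,
      Matrix.smul_apply, Matrix.one_apply, Matrix.neg_apply, Matrix.cons_val', Matrix.cons_val_zero,
      Matrix.cons_val_one, Matrix.head_cons, Matrix.head_fin_const, Matrix.empty_val',
      Matrix.cons_val_fin_one, Pi.smul_apply, Pi.zero_apply, smul_eq_mul] at e1 e2 e3 e4 f1 f2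
    set u1 := x (Sum.inl 0) with hu1_def
    set u2 := x (Sum.inl 1) with hu2_def
    set v1 := x (Sum.inr 0) with hv1_def
    set v2 := x (Sum.inr 1) with hv2_def
    simp only [if_true, if_false, mul_one, mul_zero, zero_mul, one_mul, add_zero, zero_add,
      mul_ite, ite_mul] at e1 e2 e3 e4 f1 f2
    norm_num at e1 e2 e3 e4 f1 f2
    field_simp at e3 e4
    have hu1 : u1 = 2 * v1 := by linear_combination f1
    have hu2 : u2 = 2 * v2 := by linear_combination f2
    have g3 : (lam * v1) * (↑ε * ↑ε) = 0 := by
      linear_combination (-(ε : ℂ)/2) * e3 + ((ε : ℂ)/2) * hu1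
    have g4 : (lam * v2) * (↑ε * ↑ε) = 0 := by
      linear_combination (-(ε : ℂ)/2) * e4 + ((ε : ℂ)/2) * hu2
    have h3 : lam * v1 = 0 := (mul_eq_zero.mp g3).resolve_right (mul_ne_zero hε' hε')
    have h4 : lam * v2 = 0 := (mul_eq_zero.mp g4).resolve_right (mul_ne_zero hε' hε')
    have hu2z : u2 = 0 := by linear_combination e1 + ((1:ℂ)/2 + lam) * hu1 + 2 * h3
    have hv2z : v2 = 0 := by linear_combination (-(1:ℂ)/2) * hu2 + (1/2) * hu2z
    have hu1z : u1 = 0 := by linear_combination -e2 - ((1:ℂ)/2 + lam) * hu2z + hv2z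
    have hv1z : v1 = 0 := by linear_combination (-(1:ℂ)/2) * hu1 + (1/2) * hu1z
    funext i
    rcases i with i | i <;> fin_cases i
    · exact hu1z
    · exact hu2z
    · exact hv1z
    · exact hv2z
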